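/- arXiv:2107.00453 — 3 statements merged into one kernel-verified Lean document; each statement's English description precedes it below -/
import Mathlib

section
/- Let λ, μ be partitions with μ ⊆ λ, let i_j < i_k be row indices as above. Then ∏_{q=μ_{i_k}+1}^{λ_{i_k}} [(λ_{i_j}−q)α + i_k − i_j + 1] / [(μ_{i_j}−q)α + i_k − i_j + 1] = ∏_{p=μ_{i_j}+1}^{λ_{i_j}} [(p−μ_{i_k}−1)α + i_k − i_j + 1] / [(p−λ_{i_k}−1)α + i_k − i_j + 1], as rational functions in α. -/
open scoped Classical
open Finset

noncomputable section

/-- A partition: an antitone, eventually-zero sequence of naturals.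
`part i` is the `(i+1)`-st part (0-indexed). -/
structure JPartition where
  part : ℕ → ℕ
  antitone' : Antitone part
  finite' : ∃ N, ∀ n, N ≤ n → part n = 0

namespace JPartition

/-- The size `|λ|` of a partition. -/
def size (l : JPartition) : ℕ := ∑ᶠ i, l.part i

/-- The length (number of nonzero parts). -/
def length (l : JPartition) : ℕ := Nat.card {i | 0 < l.part i}

/-- The multiplicity of `k` as a part. -/
def mult (l : JPartition) (k : ℕ) : ℕ := Nat.card {i | l.part i = k}

/-- The parts of the conjugate (transposed) partition. -/
def conjPart (l : JPartition) (j : ℕ) : ℕ := Nat.card {i | j < l.part i}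

lemma finite_set (l : JPartition) (j : ℕ) : {i | j < l.part i}.Finite := by
  obtain ⟨N, hN⟩ := l.finite'
  refine Set.Finite.subset (Set.finite_Iio N) ?_
  intro i hi
  simp only [Set.mem_setOf_eq] at hi
  by_contra hc
  simp only [Set.mem_Iio, not_lt] at hc
  have := hN i hc
  omega

/-- The conjugate (transposed) partition. -/
def conj (l : JPartition) : JPartition where
  part := l.conjPart
  antitone' := by
    intro a b hab
    exact Nat.card_mono (l.finite_set a) (fun i hi => lt_of_le_of_lt hab hi)
  finite' := by
    refine ⟨l.part 0 + 1, fun n hn => ?_⟩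
    have he : {i | n < l.part i} = (∅ : Set ℕ) := by
      ext i
      simp only [Set.mem_setOf_eq, Set.mem_empty_iff_false, iff_false, not_lt]
      calc l.part i ≤ l.part 0 := l.antitone' (Nat.zero_le i)
        _ ≤ n := by omega
    unfold conjPart
    rw [he]
    simp

/-- The arm of the (0-indexed) box `s = (i,j)` of `λ`. -/
def arm (l : JPartition) (s : ℕ × ℕ) : ℤ := (l.part s.1 : ℤ) - s.2 - 1

/-- The leg of the (0-indexed) box `s = (i,j)` of `λ`. -/
def leg (l : JPartition) (s : ℕ × ℕ) : ℤ := (l.conjPart s.2 : ℤ) - s.1 - 1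

/-- Containment of partitions: `m ⊆ l`. -/
def sub (m l : JPartition) : Prop := ∀ i, m.part i ≤ l.part i

/-- Dominance order on partitions (of the same size). -/
def domLE (m l : JPartition) : Prop :=
  m.size = l.size ∧ ∀ k, ∑ i ∈ Finset.range k, m.part i ≤ ∑ i ∈ Finset.range k, l.part i

end JPartition

/-- The rectangular partition `(b^h)`. -/
def rect (b h : ℕ) : JPartition where
  part := fun i => if i < h then b else 0
  antitone' := by
    intro x y hxy
    by_cases hy : y < h
    · have hx : x < h := lt_of_le_of_lt hxy hy
      simp [hx, hy]
    · simp [hy]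
  finite' := ⟨h, fun n hn => if_neg (by omega)⟩

/-- The rotated complement of `λ` inside the rectangle `(b^h)`. -/
def rotC (b h : ℕ) (l : JPartition) : JPartition where
  part := fun i => if i < h then b - l.part (h - 1 - i) else 0
  antitone' := by
    intro x y hxy
    by_cases hy : y < h
    · have hx : x < h := lt_of_le_of_lt hxy hy
      simp only [if_pos hx, if_pos hy]
      exact Nat.sub_le_sub_left (l.antitone' (show h - 1 - y ≤ h - 1 - x by omega)) b
    · simp [hy]
  finite' := ⟨h, fun n hn => if_neg (by omega)⟩

/-- The empty partition. -/
def emptyP : JPartition := ⟨fun _ => 0, fun _ _ _ => le_rfl, ⟨0, fun _ _ => rfl⟩⟩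

/-- The field `ℚ(α)` of rational functions in the Jack parameter. -/
abbrev K : Type := RatFunc ℚ

/-- The Jack parameter `α`, an indeterminate. -/
def alpha : K := RatFunc.X

/-- Product of `f` over all boxes of the partition `l`. -/
def boxProdM {M : Type*} [CommMonoid M] (l : JPartition) (f : ℕ × ℕ → M) : M :=
  ∏ᶠ i, ∏ j ∈ Finset.range (l.part i), f (i, j)

/-- Number of boxes of `l` satisfying `f`. -/
def boxCount (l : JPartition) (f : ℕ × ℕ → Prop) : ℕ :=
  ∑ᶠ i, ∑ j ∈ Finset.range (l.part i), if f (i, j) then 1 else 0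

/-- `c_{λ,s}(α) = a_{λ,s} α + ℓ_{λ,s} + 1`. -/
def cBox (l : JPartition) (s : ℕ × ℕ) : K := (l.arm s : K) * alpha + (l.leg s : K) + 1

/-- `c'_{λ,s}(α) = (a_{λ,s}+1) α + ℓ_{λ,s}`. -/
def cBox' (l : JPartition) (s : ℕ × ℕ) : K := ((l.arm s : K) + 1) * alpha + (l.leg s : K)

/-- `c_λ(α)`. -/
def cFun (l : JPartition) : K := boxProdM l (cBox l)

/-- `c'_λ(α)`. -/
def cFun' (l : JPartition) : K := boxProdM l (cBox' l)

/-- `c_λ(t)` evaluated at an arbitrary `t`. -/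
def cFunAt (l : JPartition) (t : K) : K :=
  boxProdM l (fun s => (l.arm s : K) * t + (l.leg s : K) + 1)

/-- `c_{μ,λ}(α) = ∏_{s∈μ} (a_{μ,s} α + ℓ_{λ,s} + 1)`. -/
def cMix (m l : JPartition) : K :=
  boxProdM m (fun s => (m.arm s : K) * alpha + (l.leg s : K) + 1)

/-- `c_{μ,λ}(t)` at an arbitrary `t`. -/
def cMixAt (m l : JPartition) (t : K) : K :=
  boxProdM m (fun s => (m.arm s : K) * t + (l.leg s : K) + 1)

/-- `c'_{λ,μ}(α) = ∏_{s∈μ} ((a_{λ,s}+1) α + ℓ_{μ,s})`. -/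
def cMix' (l m : JPartition) : K :=
  boxProdM m (fun s => ((l.arm s : K) + 1) * alpha + (m.leg s : K))

/-- The ring in which symmetric functions live: formal power series in
countably many variables over `ℚ(α)`. -/
abbrev SymF : Type := MvPowerSeries ℕ K

/-- The monomial symmetric function `m_λ`. -/
def msf (l : JPartition) : SymF :=
  fun e => if ∀ k, 0 < k → Nat.card {i | e i = k} = l.mult k then 1 else 0

/-- The power sum symmetric function `p_r`. -/
def psf (r : ℕ) : SymF :=
  fun e => if ∃ i, e = Finsupp.single i r then 1 else 0

/-- The power sum symmetric function `p_λ = ∏ p_{λ_i}`. -/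
def pProd (l : JPartition) : SymF :=
  ∏ᶠ i, if l.part i = 0 then 1 else psf (l.part i)

/-- `z_λ = ∏_k k^{m_k} m_k!`. -/
def zNum (l : JPartition) : ℕ :=
  ∏ᶠ k, if 0 < k then k ^ l.mult k * (l.mult k).factorial else 1

/-- `u_λ = ∏_k m_k!`. -/
def uNum (l : JPartition) : ℕ :=
  ∏ᶠ k, if 0 < k then (l.mult k).factorial else 1

/-- `x ∈ ℚ(α)` is a polynomial in `α` with nonnegative integer coefficients. -/
def IsNonnegPoly (x : K) : Prop :=
  ∃ P : Polynomial ℕ, x = algebraMap (Polynomial ℚ) K (P.map (Nat.castRingHom ℚ))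

/-- The data of the Jack symmetric functions at parameter `t`: a symmetric
bilinear form with `⟨p_λ,p_μ⟩ = δ_{λμ} z_λ t^{ℓ(λ)}`, and the family `J_λ`,
pairwise orthogonal, triangular with respect to the monomial symmetric
functions in dominance order, normalized by `v_{λ,(1^n)} = n!`. -/
structure JackFamily (t : K) where
  inner : SymF →ₗ[K] SymF →ₗ[K] K
  inner_symm : ∀ f g, inner f g = inner g f
  inner_p : ∀ l m : JPartition,
    inner (pProd l) (pProd m) = if l = m then (zNum l : K) * t ^ l.length else 0
  J : JPartition → SymF
  v : JPartition → JPartition → K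
  J_eq : ∀ l, J l = ∑ᶠ m : JPartition, v l m • msf m
  v_tri : ∀ l m, v l m ≠ 0 → JPartition.domLE m l
  v_norm : ∀ l : JPartition, v l (rect 1 l.size) = (Nat.factorial l.size : K)
  orth : ∀ l m, l ≠ m → inner (J l) (J m) = 0

/-- The Jack family together with the skew Jack symmetric functions
`J_{λ/μ}`, characterized by `⟨J_{λ/μ}, J_ν⟩ = ⟨J_λ, J_μ J_ν⟩`, lying in the
span of the `J_ν`, with monomial expansion coefficients `vskew`. -/
structure JackSystem (t : K) extends JackFamily t where
  skewJ : JPartition → JPartition → SymF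
  vskew : JPartition → JPartition → JPartition → K
  skew_eq : ∀ l m, skewJ l m = ∑ᶠ n : JPartition, vskew l m n • msf n
  skew_def : ∀ l m n, inner (skewJ l m) (J n) = inner (J l) (J m * J n)
  skew_mem : ∀ l m, skewJ l m ∈ Submodule.span K (Set.range J)

/-- Stanley's polynomial `g^λ_{μν} = ⟨J_λ, J_μ J_ν⟩`. -/
def gpoly {t : K} (D : JackFamily t) (l m n : JPartition) : K :=
  D.inner (D.J l) (D.J m * D.J n)

/-- The set of boxes of the skew diagram `λ/μ` in the plane `ℤ × ℤ`. -/
def skewSet (l m : JPartition) : Set (ℤ × ℤ) :=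
  {s | 0 ≤ s.1 ∧ 0 ≤ s.2 ∧ m.part s.1.toNat ≤ s.2.toNat ∧ s.2.toNat < l.part s.1.toNat}

/-- The diagrams of `λ/μ` and `λ̃/μ̃` coincide up to translation. -/
def SameUpToTranslation (l m tl tm : JPartition) : Prop :=
  ∃ d : ℤ × ℤ, skewSet tl tm = (fun s => s + d) '' skewSet l m

theorem aux_nonzero (x n : ℤ) (hn : n ≠ 0) : (x : K) * alpha + (n : K) ≠ 0 := by
  intro h
  have : ((Polynomial.C (x:ℚ)) * Polynomial.X + Polynomial.C (n:ℚ) : Polynomial ℚ) = 0 := by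
    apply RatFunc.algebraMap_injective ℚ
    simpa [alpha, map_add, map_mul, RatFunc.algebraMap_C, RatFunc.algebraMap_X] using h
  have h0 := congrArg (fun p => Polynomial.coeff p 0) this
  simp at h0
  exact hn (by exact_mod_cast h0)

theorem aux_reindex1 (f : ℤ → K) (c : ℤ) (lo hi : ℕ) (u v : ℤ)
    (hu : u = c - hi - 1) (hv : v = c - lo) :
    ∏ q ∈ Finset.Icc lo hi, f (c - q) = ∏ x ∈ Finset.Ioc u v, f x := by
  subst hu hv
  refine Finset.prod_nbij' (fun q => c - (q:ℤ)) (fun x => (c - x).toNat) ?_ ?_ ?_ ?_ ?_ <;>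
    intro q hq <;> simp_all [Finset.mem_Icc, Finset.mem_Ioc] <;> omega

theorem aux_reindex2 (f : ℤ → K) (d : ℕ) (lo hi : ℕ) (u v : ℤ)
    (hu : u = (lo:ℤ) - d - 2) (hv : v = (hi:ℤ) - d - 1) :
    ∏ q ∈ Finset.Icc lo hi, f (q - d - 1) = ∏ x ∈ Finset.Ioc u v, f x := by
  subst hu hv
  refine Finset.prod_nbij' (fun q => (q:ℤ) - d - 1) (fun x => (x + d + 1).toNat) ?_ ?_ ?_ ?_ ?_ <;>
    intro q hq <;> simp_all [Finset.mem_Icc, Finset.mem_Ioc] <;> omega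

theorem aux_core (F : ℤ → K) (hF : ∀ x, F x ≠ 0) (la ma lb mb : ℤ) (h1 : mb ≤ lb) (h2 : ma ≤ la) :
    (∏ x ∈ Finset.Ioc (la - lb - 1) (la - mb - 1), F x) /
      (∏ x ∈ Finset.Ioc (ma - lb - 1) (ma - mb - 1), F x) =
    (∏ x ∈ Finset.Ioc (ma - mb - 1) (la - mb - 1), F x) /
      (∏ x ∈ Finset.Ioc (ma - lb - 1) (la - lb - 1), F x) := by
  have hd1 : Disjoint (Finset.Ioc (ma - lb - 1) (la - lb - 1)) (Finset.Ioc (la - lb - 1) (la - mb - 1)) := by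
    rw [Finset.disjoint_left]
    intro x hx hy
    simp only [Finset.mem_Ioc] at hx hy
    omega
  have hd2 : Disjoint (Finset.Ioc (ma - lb - 1) (ma - mb - 1)) (Finset.Ioc (ma - mb - 1) (la - mb - 1)) := by
    rw [Finset.disjoint_left]
    intro x hx hy
    simp only [Finset.mem_Ioc] at hx hy
    omega
  rw [div_eq_div_iff (Finset.prod_ne_zero_iff.2 fun x _ => hF x)
      (Finset.prod_ne_zero_iff.2 fun x _ => hF x),
    mul_comm, ← Finset.prod_union hd1, Finset.Ioc_union_Ioc_eq_Ioc (by omega) (by omega),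
    mul_comm _ (∏ x ∈ Finset.Ioc (ma - lb - 1) (ma - mb - 1), F x),
    ← Finset.prod_union hd2, Finset.Ioc_union_Ioc_eq_Ioc (by omega) (by omega)]

theorem aux_main (cc : ℤ) (hcc : cc ≠ 0) (la ma lb mb : ℕ) (h1 : mb ≤ lb) (h2 : ma ≤ la) :
    ∏ q ∈ Finset.Icc (mb + 1) lb,
      (((la - q : ℤ) : K) * alpha + ((cc : ℤ) : K)) /
        (((ma - q : ℤ) : K) * alpha + ((cc : ℤ) : K)) =
    ∏ p ∈ Finset.Icc (ma + 1) la,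
      (((p - mb - 1 : ℤ) : K) * alpha + ((cc : ℤ) : K)) /
        (((p - lb - 1 : ℤ) : K) * alpha + ((cc : ℤ) : K)) := by
  have hF : ∀ x : ℤ, ((x:K) * alpha + ((cc:ℤ):K)) ≠ 0 := fun x => aux_nonzero x cc hcc
  set F : ℤ → K := fun x => (x:K) * alpha + ((cc:ℤ):K) with hFdef
  rw [Finset.prod_div_distrib, Finset.prod_div_distrib]
  have e1 : ∏ q ∈ Finset.Icc (mb + 1) lb, (((la - q : ℤ) : K) * alpha + ((cc:ℤ):K))
      = ∏ x ∈ Finset.Ioc ((la:ℤ) - lb - 1) ((la:ℤ) - mb - 1), F x :=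
    aux_reindex1 F la (mb+1) lb _ _ (by push_cast; ring) (by push_cast; ring)
  have e2 : ∏ q ∈ Finset.Icc (mb + 1) lb, (((ma - q : ℤ) : K) * alpha + ((cc:ℤ):K))
      = ∏ x ∈ Finset.Ioc ((ma:ℤ) - lb - 1) ((ma:ℤ) - mb - 1), F x :=
    aux_reindex1 F ma (mb+1) lb _ _ (by push_cast; ring) (by push_cast; ring)
  have e3 : ∏ p ∈ Finset.Icc (ma + 1) la, (((p - mb - 1 : ℤ) : K) * alpha + ((cc:ℤ):K))
      = ∏ x ∈ Finset.Ioc ((ma:ℤ) - mb - 1) ((la:ℤ) - mb - 1), F x :=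
    aux_reindex2 F mb (ma+1) la _ _ (by push_cast; ring) (by push_cast; ring)
  have e4 : ∏ p ∈ Finset.Icc (ma + 1) la, (((p - lb - 1 : ℤ) : K) * alpha + ((cc:ℤ):K))
      = ∏ x ∈ Finset.Ioc ((ma:ℤ) - lb - 1) ((la:ℤ) - lb - 1), F x :=
    aux_reindex2 F lb (ma+1) la _ _ (by push_cast; ring) (by push_cast; ring)
  rw [e1, e2, e3, e4]
  exact aux_core F hF la ma lb mb (by omega) (by omega)


/-- Lemma on products of linear factors: for rows `a < b` (0-indexed, so the
paper's `i_k - i_j = b - a`) of partitions `μ ⊆ λ`,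
`∏_{q=μ_b+1}^{λ_b} [(λ_a−q)α + (b−a) + 1]/[(μ_a−q)α + (b−a) + 1]
 = ∏_{p=μ_a+1}^{λ_a} [(p−μ_b−1)α + (b−a) + 1]/[(p−λ_b−1)α + (b−a) + 1]`. -/
theorem stmt3 (l m : JPartition) (a b : ℕ) (hab : a < b) (hsub : m.sub l) :
    ∏ q ∈ Finset.Icc (m.part b + 1) (l.part b),
      (((l.part a - q : ℤ) : K) * alpha + ((b - a + 1 : ℤ) : K)) /
        (((m.part a - q : ℤ) : K) * alpha + ((b - a + 1 : ℤ) : K)) =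
    ∏ p ∈ Finset.Icc (m.part a + 1) (l.part a),
      (((p - m.part b - 1 : ℤ) : K) * alpha + ((b - a + 1 : ℤ) : K)) /
        (((p - l.part b - 1 : ℤ) : K) * alpha + ((b - a + 1 : ℤ) : K)) :=
  aux_main ((b : ℤ) - a + 1) (by omega) (l.part a) (m.part a) (l.part b) (m.part b)
    (hsub b) (hsub a)

end
end

section
/- Let β = (b^h) be the rectangular partition with h parts equal to b, and for a partition λ ⊆ β define its rotated complement λ̂ = (b−λ_h, b−λ_{h−1}, …, b−λ_1). Then for any μ ⊆ λ ⊆ β, we have c_{μ,λ}(α) / c_{μ,β}(α) = c_{λ̂,μ̂}(α) / c_{λ̂,β}(α), where c_{μ,λ}(α) = ∏_{s∈μ} (a_{μ,s}·α + ℓ_{λ,s} + 1). -/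
open scoped Classical
open Finset

noncomputable section

lemma alpha_lin_ne_zero (a c : ℤ) (h : a ≠ 0 ∨ c ≠ 0) : (a : K) * alpha + (c : K) ≠ 0 := by
  intro h0
  have hinj : Function.Injective (algebraMap (Polynomial ℚ) K) :=
    IsFractionRing.injective _ _
  have he : (algebraMap (Polynomial ℚ) K) (Polynomial.C (a:ℚ) * Polynomial.X + Polynomial.C (c:ℚ)) = 0 := by
    rw [map_add, map_mul, RatFunc.algebraMap_X]
    simp only [RatFunc.algebraMap_C]
    push_cast at h0 ⊢
    convert h0 using 2 <;> simp [alpha]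
  have hz : (Polynomial.C (a:ℚ) * Polynomial.X + Polynomial.C (c:ℚ)) = 0 := by
    apply hinj; simpa using he
  have h1 : (a:ℚ) = 0 := by
    have := congrArg (fun p => Polynomial.coeff p 1) hz
    simpa only [Polynomial.coeff_add, Polynomial.coeff_C_mul, Polynomial.coeff_X_one,
      Polynomial.coeff_C, mul_one, if_neg one_ne_zero, add_zero, Polynomial.coeff_zero] using this
  have h2 : (c:ℚ) = 0 := by
    have := congrArg (fun p => Polynomial.coeff p 0) hz
    simpa only [Polynomial.coeff_add, Polynomial.coeff_C_mul, Polynomial.coeff_X_zero,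
      Polynomial.coeff_C, mul_zero, if_pos rfl, if_true, zero_add, Polynomial.coeff_zero] using this
  rcases h with h | h
  · exact h (by exact_mod_cast h1)
  · exact h (by exact_mod_cast h2)

section Aux

lemma Nat_card_Iio (n : ℕ) : Nat.card (Set.Iio n) = n := by
  rw [← Finset.coe_range, Nat.card_coe_set_eq, Set.ncard_coe_finset, Finset.card_range]

lemma conjPart_le_iff (l : JPartition) (j k : ℕ) : l.conjPart j ≤ k ↔ l.part k ≤ j := by
  unfold JPartition.conjPart
  constructor
  · intro hk
    by_contra hc
    push_neg at hc
    have hsub : Set.Iio (k+1) ⊆ {i | j < l.part i} := by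
      intro i hi
      simp only [Set.mem_Iio, Nat.lt_succ_iff] at hi
      exact lt_of_lt_of_le hc (l.antitone' hi)
    have h1 := Nat.card_mono (l.finite_set j) hsub
    rw [Nat_card_Iio] at h1
    omega
  · intro hk
    have hsub : {i | j < l.part i} ⊆ Set.Iio k := by
      intro i hi
      simp only [Set.mem_setOf_eq] at hi
      simp only [Set.mem_Iio]
      by_contra hik
      push_neg at hik
      exact absurd (le_trans (l.antitone' hik) hk) (not_le.mpr hi)
    have h1 := Nat.card_mono (Set.finite_Iio k) hsub
    rw [Nat_card_Iio] at h1
    exact h1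

lemma part_le_iff (l : JPartition) (j k : ℕ) : j < l.part k ↔ k < l.conjPart j := by
  rw [← not_le, ← not_le, conjPart_le_iff]

end Aux
section Aux2

lemma boxProdM_eq_prod (l : JPartition) (f : ℕ × ℕ → K) (n : ℕ)
    (hn : ∀ i, n ≤ i → l.part i = 0) :
    boxProdM l f = ∏ i ∈ Finset.range n, ∏ j ∈ Finset.range (l.part i), f (i, j) := by
  apply finprod_eq_prod_of_mulSupport_subset
  intro i hi
  simp only [Function.mem_mulSupport] at hi
  by_contra hc
  simp only [Finset.coe_range, Set.mem_Iio, not_lt] at hc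
  rw [hn i hc] at hi
  simp at hi

lemma rect_part (b h i : ℕ) : (rect b h).part i = if i < h then b else 0 := rfl

lemma rotC_part (b h : ℕ) (l : JPartition) (i : ℕ) :
    (rotC b h l).part i = if i < h then b - l.part (h - 1 - i) else 0 := rfl

lemma rect_conjPart (b h j : ℕ) (hj : j < b) : (rect b h).conjPart j = h := by
  unfold JPartition.conjPart
  have : {i | j < (rect b h).part i} = Set.Iio h := by
    ext i
    simp only [Set.mem_setOf_eq, Set.mem_Iio, rect_part]
    constructor
    · intro hi; by_contra hc; simp [hc] at hi
    · intro hi; simpa [hi] using hj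
  rw [this, Nat_card_Iio]

/-- `cMix` as a finite double product with `if`s. -/
lemma cMix_eq_prod (b h : ℕ) (m l : JPartition)
    (hb : ∀ i, m.part i ≤ b) (hh : ∀ i, h ≤ i → m.part i = 0) :
    cMix m l = ∏ q ∈ Finset.range h ×ˢ Finset.range b,
      if q.2 < m.part q.1 then
        (((m.part q.1 : ℤ) - q.2 - 1 : ℤ) : K) * alpha + (((l.conjPart q.2 : ℤ) - q.1 : ℤ) : K)
      else 1 := by
  unfold cMix
  rw [boxProdM_eq_prod _ _ h hh, Finset.prod_product]
  apply Finset.prod_congr rfl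
  intro i _
  have hrange : Finset.range (m.part i) =
      (Finset.range b).filter (fun j => j < m.part i) := by
    ext j
    simp only [Finset.mem_range, Finset.mem_filter]
    have := hb i
    omega
  rw [hrange, Finset.prod_filter]
  apply Finset.prod_congr rfl
  intro j _
  by_cases hj : j < m.part i
  · rw [if_pos hj, if_pos hj]
    unfold JPartition.arm JPartition.leg
    push_cast
    ring
  · rw [if_neg hj, if_neg hj]

lemma telescope (x : K) (v n : ℕ) (hv : v ≤ n) :
    (x + v) * ∏ k ∈ Finset.Ico v n, (x + k + 1) =
      (x + n) * ∏ k ∈ Finset.Ico v n, (x + k) := by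
  induction n, hv using Nat.le_induction with
  | base => simp
  | succ n hv ih =>
    rw [Finset.prod_Ico_succ_top hv, Finset.prod_Ico_succ_top hv, ← mul_assoc, ih]
    push_cast
    ring

end Aux2
section Aux3

def BigN (b h : ℕ) (m l : JPartition) : K :=
  ∏ p ∈ (Finset.range h ×ˢ Finset.range b) ×ˢ Finset.range h,
    if l.part p.2 ≤ p.1.2 ∧ p.1.2 < m.part p.1.1 then
      (((m.part p.1.1 : ℤ) - p.1.2 - 1 : ℤ) : K) * alpha + (((p.2 : ℤ) - p.1.1 : ℤ) : K)
    else 1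

def BigP (b h : ℕ) (m l : JPartition) : K :=
  ∏ p ∈ (Finset.range h ×ˢ Finset.range b) ×ˢ Finset.range h,
    if l.part p.2 ≤ p.1.2 ∧ p.1.2 < m.part p.1.1 then
      (((m.part p.1.1 : ℤ) - p.1.2 - 1 : ℤ) : K) * alpha + (((p.2 : ℤ) - p.1.1 + 1 : ℤ) : K)
    else 1

lemma stepA (b h : ℕ) (m l : JPartition) (h1 : m.sub l) (h2 : l.sub (rect b h)) :
    cMix m l * BigP b h m l = cMix m (rect b h) * BigN b h m l := by
  have hrb : ∀ i, (rect b h).part i ≤ b := by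
    intro i; rw [rect_part]; split <;> omega
  have hlb : ∀ i, l.part i ≤ b := fun i => le_trans (h2 i) (hrb i)
  have hmb : ∀ i, m.part i ≤ b := fun i => le_trans (h1 i) (hlb i)
  have hlh : ∀ i, h ≤ i → l.part i = 0 := by
    intro i hi
    have := h2 i
    rw [rect_part, if_neg (by omega)] at this
    omega
  have hmh : ∀ i, h ≤ i → m.part i = 0 := fun i hi => by
    have := h1 i; have := hlh i hi; omega
  have hBigN : BigN b h m l = ∏ q ∈ Finset.range h ×ˢ Finset.range b,
      ∏ k ∈ Finset.range h,
        (if l.part k ≤ q.2 ∧ q.2 < m.part q.1 then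
          (((m.part q.1 : ℤ) - q.2 - 1 : ℤ) : K) * alpha + (((k : ℤ) - q.1 : ℤ) : K)
        else 1) := Finset.prod_product _ _ _
  have hBigP : BigP b h m l = ∏ q ∈ Finset.range h ×ˢ Finset.range b,
      ∏ k ∈ Finset.range h,
        (if l.part k ≤ q.2 ∧ q.2 < m.part q.1 then
          (((m.part q.1 : ℤ) - q.2 - 1 : ℤ) : K) * alpha + (((k : ℤ) - q.1 + 1 : ℤ) : K)
        else 1) := Finset.prod_product _ _ _
  rw [cMix_eq_prod b h m l hmb hmh, cMix_eq_prod b h m (rect b h) hmb hmh,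
    hBigN, hBigP, ← Finset.prod_mul_distrib, ← Finset.prod_mul_distrib]
  apply Finset.prod_congr rfl
  rintro ⟨i, j⟩ hq
  simp only [Finset.mem_product, Finset.mem_range] at hq
  obtain ⟨hih, hjb⟩ := hq
  by_cases hj : j < m.part i
  · simp only [if_pos hj, hj, and_true]
    rw [rect_conjPart b h j hjb]
    simp only [← conjPart_le_iff]
    set v := l.conjPart j with hvdef
    have hv : v ≤ h := (conjPart_le_iff l j h).mpr (by rw [hlh h le_rfl]; omega)
    have hfilter : ∀ G : ℕ → K,
        (∏ k ∈ Finset.range h, if v ≤ k then G k else 1) = ∏ k ∈ Finset.Ico v h, G k := by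
      intro G
      rw [← Finset.prod_filter]
      congr 1
      ext k
      simp only [Finset.mem_filter, Finset.mem_range, Finset.mem_Ico]
      omega
    rw [hfilter, hfilter]
    set A : K := (((m.part i : ℤ) - j - 1 : ℤ) : K) * alpha with hA
    have e1 : ∏ k ∈ Finset.Ico v h, (A + (((k : ℤ) - i + 1 : ℤ) : K)) =
        ∏ k ∈ Finset.Ico v h, ((A - (i : K)) + k + 1) :=
      Finset.prod_congr rfl (fun k _ => by push_cast; ring)
    have e2 : ∏ k ∈ Finset.Ico v h, (A + (((k : ℤ) - i : ℤ) : K)) =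
        ∏ k ∈ Finset.Ico v h, ((A - (i : K)) + k) :=
      Finset.prod_congr rfl (fun k _ => by push_cast; ring)
    rw [e1, e2]
    have ht := telescope (A - (i : K)) v h hv
    push_cast
    linear_combination ht
  · simp only [if_neg hj, hj, and_false, if_false, Finset.prod_const_one, mul_one]

end Aux3
section Aux4

lemma Big_rot (x : ℤ) (b h : ℕ) (m l : JPartition) (h1 : m.sub l) (h2 : l.sub (rect b h)) :
    (∏ p ∈ (Finset.range h ×ˢ Finset.range b) ×ˢ Finset.range h,
      if (rotC b h m).part p.2 ≤ p.1.2 ∧ p.1.2 < (rotC b h l).part p.1.1 then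
        ((((rotC b h l).part p.1.1 : ℤ) - p.1.2 - 1 : ℤ) : K) * alpha
          + (((p.2 : ℤ) - p.1.1 + x : ℤ) : K)
      else 1)
    = ∏ p ∈ (Finset.range h ×ˢ Finset.range b) ×ˢ Finset.range h,
      if l.part p.2 ≤ p.1.2 ∧ p.1.2 < m.part p.1.1 then
        (((m.part p.1.1 : ℤ) - p.1.2 - 1 : ℤ) : K) * alpha
          + (((p.2 : ℤ) - p.1.1 + x : ℤ) : K)
      else 1 := by
  have hrb : ∀ i, (rect b h).part i ≤ b := by
    intro i; rw [rect_part]; split <;> omega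
  have hlb : ∀ i, l.part i ≤ b := fun i => le_trans (h2 i) (hrb i)
  have hmb : ∀ i, m.part i ≤ b := fun i => le_trans (h1 i) (hlb i)
  -- Step 1: rotate the index set
  have step1 : (∏ p ∈ (Finset.range h ×ˢ Finset.range b) ×ˢ Finset.range h,
      if (rotC b h m).part p.2 ≤ p.1.2 ∧ p.1.2 < (rotC b h l).part p.1.1 then
        ((((rotC b h l).part p.1.1 : ℤ) - p.1.2 - 1 : ℤ) : K) * alpha
          + (((p.2 : ℤ) - p.1.1 + x : ℤ) : K)
      else 1)
      = ∏ p ∈ (Finset.range h ×ˢ Finset.range b) ×ˢ Finset.range h,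
      if l.part p.2 ≤ p.1.2 ∧ p.1.2 < m.part p.1.1 then
        (((p.1.2 : ℤ) - l.part p.2 : ℤ) : K) * alpha
          + (((p.2 : ℤ) - p.1.1 + x : ℤ) : K)
      else 1 := by
    apply Finset.prod_nbij' (fun p => ((h-1-p.2, b-1-p.1.2), h-1-p.1.1))
      (fun p => ((h-1-p.2, b-1-p.1.2), h-1-p.1.1))
    · rintro ⟨⟨i, j⟩, k⟩ hp
      simp only [Finset.mem_product, Finset.mem_range] at hp ⊢
      omega
    · rintro ⟨⟨i, j⟩, k⟩ hp
      simp only [Finset.mem_product, Finset.mem_range] at hp ⊢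
      omega
    · rintro ⟨⟨i, j⟩, k⟩ hp
      simp only [Finset.mem_product, Finset.mem_range] at hp
      simp only [Prod.mk.injEq]
      omega
    · rintro ⟨⟨i, j⟩, k⟩ hp
      simp only [Finset.mem_product, Finset.mem_range] at hp
      simp only [Prod.mk.injEq]
      omega
    · rintro ⟨⟨i, j⟩, k⟩ hp
      simp only [Finset.mem_product, Finset.mem_range] at hp
      obtain ⟨⟨hih, hjb⟩, hkh⟩ := hp
      dsimp only
      have hm' : (rotC b h m).part k = b - m.part (h-1-k) := by
        rw [rotC_part, if_pos hkh]
      have hl' : (rotC b h l).part i = b - l.part (h-1-i) := by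
        rw [rotC_part, if_pos hih]
      have hcond : ((rotC b h m).part k ≤ j ∧ j < (rotC b h l).part i)
          ↔ (l.part (h-1-i) ≤ b-1-j ∧ b-1-j < m.part (h-1-k)) := by
        rw [hm', hl']
        have := hmb (h-1-k); have := hlb (h-1-i)
        omega
      by_cases hC : l.part (h-1-i) ≤ b-1-j ∧ b-1-j < m.part (h-1-k)
      · rw [if_pos (hcond.mpr hC), if_pos hC]
        have e1 : ((rotC b h l).part i : ℤ) - j - 1
            = ((b-1-j : ℕ) : ℤ) - (l.part (h-1-i) : ℤ) := by
          rw [hl']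
          have := hlb (h-1-i)
          omega
        have e2 : (k : ℤ) - i + x = ((h-1-i : ℕ) : ℤ) - ((h-1-k : ℕ) : ℤ) + x := by
          omega
        rw [e1, e2]
      · rw [if_neg (fun hh' => hC (hcond.mp hh')), if_neg hC]
  -- Step 2: reverse each row segment
  rw [step1]
  rw [← Finset.prod_filter (fun p : (ℕ × ℕ) × ℕ => l.part p.2 ≤ p.1.2 ∧ p.1.2 < m.part p.1.1),
    ← Finset.prod_filter (fun p : (ℕ × ℕ) × ℕ => l.part p.2 ≤ p.1.2 ∧ p.1.2 < m.part p.1.1)]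
  apply Finset.prod_nbij'
    (fun p => ((p.1.1, l.part p.2 + m.part p.1.1 - 1 - p.1.2), p.2))
    (fun p => ((p.1.1, l.part p.2 + m.part p.1.1 - 1 - p.1.2), p.2))
  · rintro ⟨⟨i, j⟩, k⟩ hp
    simp only [Finset.mem_filter, Finset.mem_product, Finset.mem_range] at hp ⊢
    have := hmb i
    omega
  · rintro ⟨⟨i, j⟩, k⟩ hp
    simp only [Finset.mem_filter, Finset.mem_product, Finset.mem_range] at hp ⊢
    have := hmb i
    omega
  · rintro ⟨⟨i, j⟩, k⟩ hp
    simp only [Finset.mem_filter, Finset.mem_product, Finset.mem_range] at hp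
    simp only [Prod.mk.injEq]
    refine ⟨⟨trivial, by omega⟩, trivial⟩
  · rintro ⟨⟨i, j⟩, k⟩ hp
    simp only [Finset.mem_filter, Finset.mem_product, Finset.mem_range] at hp
    simp only [Prod.mk.injEq]
    refine ⟨⟨trivial, by omega⟩, trivial⟩
  · rintro ⟨⟨i, j⟩, k⟩ hp
    simp only [Finset.mem_filter, Finset.mem_product, Finset.mem_range] at hp
    obtain ⟨⟨⟨hih, hjb⟩, hkh⟩, hlj, hjm⟩ := hp
    dsimp only
    have e1 : (j : ℤ) - (l.part k : ℤ)
        = (m.part i : ℤ) - ((l.part k + m.part i - 1 - j : ℕ) : ℤ) - 1 := by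
      omega
    rw [e1]

end Aux4

section Aux5

lemma rotC_sub (b h : ℕ) (m l : JPartition) (h1 : m.sub l) :
    (rotC b h l).sub (rotC b h m) := by
  intro i
  rw [rotC_part, rotC_part]
  split
  · exact Nat.sub_le_sub_left (h1 _) b
  · exact le_rfl

lemma rotC_sub_rect (b h : ℕ) (l : JPartition) : (rotC b h l).sub (rect b h) := by
  intro i
  rw [rotC_part, rect_part]
  split
  · omega
  · exact le_rfl

lemma BigN_rot (b h : ℕ) (m l : JPartition) (h1 : m.sub l) (h2 : l.sub (rect b h)) :
    BigN b h (rotC b h l) (rotC b h m) = BigN b h m l := by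
  have hx := Big_rot 0 b h m l h1 h2
  unfold BigN
  simpa [add_zero] using hx

lemma BigP_rot (b h : ℕ) (m l : JPartition) (h1 : m.sub l) (h2 : l.sub (rect b h)) :
    BigP b h (rotC b h l) (rotC b h m) = BigP b h m l := by
  have hx := Big_rot 1 b h m l h1 h2
  unfold BigP
  simpa using hx

lemma cMix_rect_ne_zero (b h : ℕ) (m : JPartition)
    (hmb : ∀ i, m.part i ≤ b) (hmh : ∀ i, h ≤ i → m.part i = 0) :
    cMix m (rect b h) ≠ 0 := by
  rw [cMix_eq_prod b h m (rect b h) hmb hmh]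
  rw [Finset.prod_ne_zero_iff]
  rintro ⟨i, j⟩ hq
  simp only [Finset.mem_product, Finset.mem_range] at hq
  obtain ⟨hih, hjb⟩ := hq
  dsimp only
  split
  · rw [rect_conjPart b h j hjb]
    exact alpha_lin_ne_zero _ _ (Or.inr (by omega))
  · exact one_ne_zero

lemma BigP_ne_zero (b h : ℕ) (m l : JPartition) (h1 : m.sub l) (h2 : l.sub (rect b h)) :
    BigP b h m l ≠ 0 := by
  unfold BigP
  rw [Finset.prod_ne_zero_iff]
  rintro ⟨⟨i, j⟩, k⟩ hp
  simp only [Finset.mem_product, Finset.mem_range] at hp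
  obtain ⟨⟨hih, hjb⟩, hkh⟩ := hp
  dsimp only
  split
  · rename_i hC
    obtain ⟨hlk, hjm⟩ := hC
    apply alpha_lin_ne_zero
    by_contra hcon
    push_neg at hcon
    obtain ⟨ha, hc⟩ := hcon
    have hik : k ≤ i := by omega
    have hmono := m.antitone' hik
    have h1k := h1 k
    omega
  · exact one_ne_zero

end Aux5


/-- For `μ ⊆ λ ⊆ β = (b^h)` with rotated complements `λ̂ ⊆ μ̂ ⊆ β`:
`c_{μ,λ}(α)/c_{μ,β}(α) = c_{λ̂,μ̂}(α)/c_{λ̂,β}(α)`. -/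
theorem stmt4 (b h : ℕ) (l m : JPartition) (h1 : m.sub l) (h2 : l.sub (rect b h)) :
    cMix m l / cMix m (rect b h) =
      cMix (rotC b h l) (rotC b h m) / cMix (rotC b h l) (rect b h) := by
  have hrb : ∀ i, (rect b h).part i ≤ b := by
    intro i; rw [rect_part]; split <;> omega
  have hlb : ∀ i, l.part i ≤ b := fun i => le_trans (h2 i) (hrb i)
  have hmb : ∀ i, m.part i ≤ b := fun i => le_trans (h1 i) (hlb i)
  have hlh : ∀ i, h ≤ i → l.part i = 0 := by
    intro i hi
    have := h2 i
    rw [rect_part, if_neg (by omega)] at this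
    omega
  have hmh : ∀ i, h ≤ i → m.part i = 0 := fun i hi => by
    have := h1 i; have := hlh i hi; omega
  have hrotb : ∀ i, (rotC b h l).part i ≤ b := by
    intro i; rw [rotC_part]; split <;> omega
  have hroth : ∀ i, h ≤ i → (rotC b h l).part i = 0 := by
    intro i hi; rw [rotC_part, if_neg (by omega)]
  have A := stepA b h m l h1 h2
  have B := stepA b h (rotC b h l) (rotC b h m)
    (rotC_sub b h m l h1) (rotC_sub_rect b h m)
  rw [BigN_rot b h m l h1 h2, BigP_rot b h m l h1 h2] at B
  have hP := BigP_ne_zero b h m l h1 h2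
  have hD1 := cMix_rect_ne_zero b h m hmb hmh
  have hD2 := cMix_rect_ne_zero b h (rotC b h l) hrotb hroth
  rw [div_eq_div_iff hD1 hD2]
  apply mul_right_cancel₀ hP
  linear_combination (cMix (rotC b h l) (rect b h)) * A - (cMix m (rect b h)) * B

end
end

section
/- Let β = (b^h), μ ⊂ λ ⊆ β, let (i,j) be a box of λ not in μ such that μ together with (i,j) is again a partition μ₊ (i.e. μ_{i−1} ≥ μ_i + 1 = j). Then c_{μ₊,λ}(α)/c_{μ,λ}(α) = [c_{λ̂,μ̂₊}(α)·c_{μ₊,β}(α)] / [c_{λ̂,μ̂}(α)·c_{μ,β}(α)], where hats denote rotated complements in β and c_{μ,λ}(α) = ∏_{s∈μ}(a_{μ,s}α + ℓ_{λ,s} + 1). -/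
open scoped Classical
open Finset

noncomputable section

namespace Stmt6Aux

open Finset

/-- A down-closed finset of naturals contained in `range h` equals `range` of its card. -/
lemma filter_eq_range {h : ℕ} (p : ℕ → Prop) [DecidablePred p]
    (hdc : ∀ {x y}, y ≤ x → p x → p y) :
    (Finset.range h).filter p = Finset.range (((Finset.range h).filter p).card) := by
  set s := (Finset.range h).filter p with hs
  have hmem : ∀ x ∈ s, ∀ y ≤ x, y ∈ s := by
    intro x hx y hy
    simp only [hs, mem_filter, mem_range] at hx ⊢
    exact ⟨lt_of_le_of_lt hy hx.1, hdc hy hx.2⟩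
  ext x
  simp only [mem_range]
  constructor
  · intro hx
    have : Finset.range (x + 1) ⊆ s := by
      intro y hy
      exact hmem x hx y (by simpa using Nat.lt_succ_iff.mp (mem_range.mp hy))
    have := Finset.card_le_card this
    simpa using this
  · intro hx
    by_contra hxs
    have : s ⊆ Finset.range x := by
      intro y hy
      rw [mem_range]
      by_contra hyx
      exact hxs (hmem y hy x (le_of_not_gt hyx))
    have := Finset.card_le_card this
    simp at this
    omega

end Stmt6Aux
namespace Stmt6Aux
open Finset

lemma conjPart_eq_card {X : JPartition} {h c : ℕ} (hX : ∀ r, h ≤ r → X.part r = 0) :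
    X.conjPart c = ((Finset.range h).filter (fun r => c < X.part r)).card := by
  have hset : {i | c < X.part i} = ↑((Finset.range h).filter (fun r => c < X.part r)) := by
    ext r
    simp only [Set.mem_setOf_eq, coe_filter, mem_range, Set.mem_setOf_eq]
    constructor
    · intro hr
      refine ⟨?_, hr⟩
      by_contra hrh
      rw [hX r (le_of_not_gt hrh)] at hr
      omega
    · exact fun hr => hr.2
  rw [JPartition.conjPart, hset, Nat.card_coe_set_eq, Set.ncard_coe_finset]

lemma boxProdM_eq_prod {M : Type*} [CommMonoid M] {l : JPartition} {h : ℕ}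
    (hl : ∀ r, h ≤ r → l.part r = 0) (f : ℕ × ℕ → M) :
    boxProdM l f = ∏ r ∈ Finset.range h, ∏ c ∈ Finset.range (l.part r), f (r, c) := by
  rw [boxProdM]
  apply finprod_eq_prod_of_mulSupport_subset
  intro r hr
  simp only [Function.mem_mulSupport] at hr
  simp only [coe_range, Set.mem_Iio]
  by_contra hrh
  rw [hl r (le_of_not_gt hrh)] at hr
  simp at hr

lemma nz (a t : ℤ) (ht : t ≠ 0) : (a : K) * alpha + (t : K) ≠ 0 := by
  have key : (a : K) * alpha + (t : K) =
      algebraMap (Polynomial ℚ) K ((a : Polynomial ℚ) * Polynomial.X + (t : Polynomial ℚ)) := by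
    rw [map_add, map_mul, map_intCast, map_intCast, alpha, RatFunc.algebraMap_X]
  rw [key]
  intro hc
  have hinj := IsFractionRing.injective (Polynomial ℚ) K
  have h0 : ((a : Polynomial ℚ) * Polynomial.X + (t : Polynomial ℚ)) = 0 := by
    apply hinj
    rw [hc, map_zero]
  have := congrArg (fun p => Polynomial.coeff p 0) h0
  simp [Polynomial.intCast_coeff_zero] at this
  exact_mod_cast ht this

end Stmt6Aux
namespace Stmt6Aux
open Finset

lemma slope1 (x z : K) (p q : ℕ) (hpq : p ≤ q) :
    (x + ((p : K) + z)) * ∏ r ∈ Finset.Ico p q, (x + (((r : K) + 1) + z)) =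
      ∏ r ∈ Finset.Icc p q, (x + ((r : K) + z)) := by
  have h2 : Finset.Ico (p+1) (q+1) = Finset.Ioc p q := by
    ext r; simp only [Finset.mem_Ico, Finset.mem_Ioc]; omega
  have h1 : ∏ r ∈ Finset.Ico p q, (x + (((r : K) + 1) + z)) =
      ∏ r ∈ Finset.Ioc p q, (x + ((r : K) + z)) := by
    rw [← h2, ← Finset.prod_Ico_add' (fun r : ℕ => x + ((r : K) + z)) p q 1]
    apply Finset.prod_congr rfl
    intro r _
    push_cast
    ring
  rw [h1, Finset.Icc_eq_cons_Ioc hpq, Finset.prod_cons]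

lemma slope2 (x z : K) (p q : ℕ) (hpq : p ≤ q) :
    (∏ r ∈ Finset.Ico p q, (x + ((r : K) + z))) * (x + ((q : K) + z)) =
      ∏ r ∈ Finset.Icc p q, (x + ((r : K) + z)) := by
  rw [mul_comm, ← Finset.Ico_insert_right hpq, Finset.prod_insert Finset.right_notMem_Ico]

lemma master (z : K) (h j : ℕ) (f : ℕ → ℕ) (hf : Antitone f) :
    (∏ c ∈ Finset.range (j + 1),
        (((j : K) - (c : K)) * alpha + ((((Finset.range h).filter (fun r => c < f r)).card : K) + z))) *
      ∏ r ∈ (Finset.range h).filter (fun r => f r ≤ j),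
        (((j : K) - (f r : K)) * alpha + (((r : K) + 1) + z)) =
    ((∏ c ∈ Finset.range j,
        (((j : K) - 1 - (c : K)) * alpha + ((((Finset.range h).filter (fun r => c < f r)).card : K) + z))) *
      ∏ r ∈ (Finset.range h).filter (fun r => f r ≤ j),
        (((j : K) - (f r : K)) * alpha + ((r : K) + z))) *
      ((j : K) * alpha + ((h : K) + z)) := by
  set L : ℕ → ℕ := fun c => ((Finset.range h).filter (fun r => c < f r)).card with hL
  set N : ℕ → ℕ := fun k => if k ≤ j then L (j - k) else h with hN
  have hfr : ∀ c, (Finset.range h).filter (fun r => c < f r) = Finset.range (L c) := by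
    intro c
    exact filter_eq_range _ (fun {x y} hyx hx => lt_of_lt_of_le hx (hf hyx))
  have hNmem : ∀ k r, r < N k ↔ (r < h ∧ (k ≤ j → j - k < f r)) := by
    intro k r
    by_cases hk : k ≤ j
    · simp only [hN, if_pos hk]
      constructor
      · intro hr
        have h2 : r ∈ Finset.range (L (j - k)) := Finset.mem_range.mpr hr
        rw [← hfr] at h2
        simp only [Finset.mem_filter, Finset.mem_range] at h2
        exact ⟨h2.1, fun _ => h2.2⟩
      · intro ⟨h1, h2⟩
        have h3 : r ∈ (Finset.range h).filter (fun r => j - k < f r) :=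
          Finset.mem_filter.mpr ⟨Finset.mem_range.mpr h1, h2 hk⟩
        rw [hfr] at h3
        exact Finset.mem_range.mp h3
    · simp only [hN, if_neg hk]
      exact ⟨fun hr => ⟨hr, fun hc => absurd hc hk⟩, fun hr => hr.1⟩
  have hNmono : ∀ a, a ≤ j → N a ≤ N (a + 1) := by
    intro a ha
    by_contra hc
    push_neg at hc
    have hr1 : N (a+1) < N a := hc
    have hr2 : ¬ N (a+1) < N (a+1) := lt_irrefl _
    rw [hNmem] at hr1
    rw [hNmem] at hr2
    omega
  have hfiber : ∀ a, a ≤ j →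
      (Finset.range h).filter (fun r => f r = j - a) = Finset.Ico (N a) (N (a + 1)) := by
    intro a ha
    ext r
    have h1 := hNmem a r
    have h2 := hNmem (a + 1) r
    simp only [Finset.mem_filter, Finset.mem_range, Finset.mem_Ico]
    omega
  have hfib : ∀ (u : ℕ → K),
      (∏ r ∈ (Finset.range h).filter (fun r => f r ≤ j), (((j:K) - (f r : K)) * alpha + u r)) =
      ∏ a ∈ Finset.range (j + 1), ∏ r ∈ Finset.Ico (N a) (N (a + 1)), ((a : K) * alpha + u r) := by
    intro u
    rw [← Finset.prod_fiberwise_of_maps_to (g := f) (t := Finset.range (j + 1))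
      (fun r hr => Finset.mem_range.mpr (Nat.lt_succ_of_le (Finset.mem_filter.mp hr).2))]
    rw [← Finset.prod_range_reflect]
    apply Finset.prod_congr rfl
    intro a ha
    rw [Finset.mem_range] at ha
    have ha' : a ≤ j := by omega
    have hre : j + 1 - 1 - a = j - a := by omega
    rw [hre]
    have hss : ((Finset.range h).filter (fun r => f r ≤ j)).filter (fun r => f r = j - a)
        = (Finset.range h).filter (fun r => f r = j - a) := by
      ext r
      simp only [Finset.mem_filter, Finset.mem_range]
      omega
    rw [hss, hfiber a ha']
    apply Finset.prod_congr rfl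
    intro r hr
    have hfr' : f r = j - a := by
      have h4 : r ∈ (Finset.range h).filter (fun r => f r = j - a) := by
        rw [hfiber a ha']; exact hr
      exact (Finset.mem_filter.mp h4).2
    rw [hfr']
    have h5 : ((j : K) - ((j - a : ℕ) : K)) = (a : K) := by
      push_cast [Nat.cast_sub ha']
      ring
    rw [h5]
  have hcolL : (∏ c ∈ Finset.range (j + 1),
      (((j : K) - (c : K)) * alpha + ((L c : K) + z))) =
      ∏ a ∈ Finset.range (j + 1), ((a : K) * alpha + ((N a : K) + z)) := by
    rw [← Finset.prod_range_reflect]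
    apply Finset.prod_congr rfl
    intro a ha
    rw [Finset.mem_range] at ha
    have ha' : a ≤ j := by omega
    have hre : j + 1 - 1 - a = j - a := by omega
    rw [hre]
    have h1 : ((j : K) - ((j - a : ℕ) : K)) = (a : K) := by
      push_cast [Nat.cast_sub ha']; ring
    have h2 : N a = L (j - a) := by simp [hN, ha']
    rw [h1, h2]
  have hcolR : (∏ c ∈ Finset.range j,
      (((j : K) - 1 - (c : K)) * alpha + ((L c : K) + z))) * ((j:K) * alpha + ((h:K) + z)) =
      ∏ a ∈ Finset.range (j + 1), ((a : K) * alpha + ((N (a + 1) : K) + z)) := by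
    rw [Finset.prod_range_succ]
    congr 1
    · rw [← Finset.prod_range_reflect]
      apply Finset.prod_congr rfl
      intro a ha
      rw [Finset.mem_range] at ha
      have hre : j - 1 - a = j - (a + 1) := by omega
      rw [hre]
      have h1 : ((j : K) - 1 - ((j - (a+1) : ℕ) : K)) = (a : K) := by
        push_cast [Nat.cast_sub (by omega : a + 1 ≤ j)]; ring
      have h2 : N (a + 1) = L (j - (a + 1)) := by simp [hN, (by omega : a + 1 ≤ j)]
      rw [h1, h2]
    · have h2 : N (j + 1) = h := by simp [hN]
      rw [h2]
  have e1 : (∏ a ∈ Finset.range (j+1), ((a:K) * alpha + ((N a : K) + z))) *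
      (∏ a ∈ Finset.range (j+1), ∏ r ∈ Finset.Ico (N a) (N (a+1)),
        ((a:K) * alpha + (((r:K) + 1) + z))) =
      (∏ a ∈ Finset.range (j+1), ((a:K) * alpha + ((N (a+1) : K) + z))) *
      (∏ a ∈ Finset.range (j+1), ∏ r ∈ Finset.Ico (N a) (N (a+1)),
        ((a:K) * alpha + ((r:K) + z))) := by
    rw [← Finset.prod_mul_distrib, ← Finset.prod_mul_distrib]
    apply Finset.prod_congr rfl
    intro a ha
    rw [Finset.mem_range] at ha
    have ha' : a ≤ j := by omega
    have hpq := hNmono a ha'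
    refine (slope1 ((a:K) * alpha) z (N a) (N (a+1)) hpq).trans ?_
    rw [← slope2 ((a:K) * alpha) z (N a) (N (a+1)) hpq]
    ring
  rw [hfib (fun r => ((r:K) + 1) + z), hfib (fun r => (r:K) + z), hcolL, e1, ← hcolR]
  ring

end Stmt6Aux
namespace Stmt6Aux
open Finset

lemma rotC_part {b h : ℕ} (X : JPartition) {u : ℕ} (hu : u < h) :
    (rotC b h X).part u = b - X.part (h - 1 - u) := if_pos hu

lemma rotC_vanish (b h : ℕ) (X : JPartition) : ∀ r, h ≤ r → (rotC b h X).part r = 0 :=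
  fun r hr => if_neg (by omega)

lemma lt_conjPart {Y : JPartition} {h r c : ℕ} (hYv : ∀ r, h ≤ r → Y.part r = 0)
    (hr : r < h) (hc : c < Y.part r) : r < Y.conjPart c := by
  rw [conjPart_eq_card hYv]
  have hsub : Finset.range (r + 1) ⊆ (Finset.range h).filter (fun r' => c < Y.part r') := by
    intro r' hr'
    rw [Finset.mem_range] at hr'
    refine Finset.mem_filter.mpr ⟨Finset.mem_range.mpr (by omega), ?_⟩
    exact lt_of_lt_of_le hc (Y.antitone' (by omega))
  have := Finset.card_le_card hsub
  simp only [Finset.card_range] at this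
  omega

lemma rect_conjPart {b h c : ℕ} (hc : c < b) : (rect b h).conjPart c = h := by
  rw [conjPart_eq_card (h := h) (fun r hr => if_neg (by omega))]
  have : (Finset.range h).filter (fun r => c < (rect b h).part r) = Finset.range h := by
    apply Finset.filter_true_of_mem
    intro r hr
    rw [Finset.mem_range] at hr
    show c < (rect b h).part r
    simp only [rect, if_pos hr]
    exact hc
  rw [this, Finset.card_range]

lemma rotC_conjPart {b h c : ℕ} (X : JPartition) (hc : c < b)
    (hXb : ∀ r, X.part r ≤ b) (hXv : ∀ r, h ≤ r → X.part r = 0) :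
    (rotC b h X).conjPart c = h - X.conjPart (b - 1 - c) := by
  rw [conjPart_eq_card (h := h) (rotC_vanish b h X), conjPart_eq_card (h := h) hXv]
  have h1 : (Finset.range h).filter (fun u => c < (rotC b h X).part u) =
      (Finset.range h).filter (fun u => ¬ (b - 1 - c < X.part (h - 1 - u))) := by
    ext u
    simp only [Finset.mem_filter, Finset.mem_range]
    constructor
    · rintro ⟨hu, hcu⟩
      rw [rotC_part X hu] at hcu
      have hb := hXb (h - 1 - u)
      exact ⟨hu, by omega⟩
    · rintro ⟨hu, hcu⟩
      refine ⟨hu, ?_⟩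
      rw [rotC_part X hu]
      have hb := hXb (h - 1 - u)
      omega
  rw [h1, Finset.filter_not, Finset.card_sdiff_of_subset (Finset.filter_subset _ _), Finset.card_range]
  congr 1
  apply Finset.card_bij (fun u _ => h - 1 - u)
  · intro u hu
    simp only [Finset.mem_filter, Finset.mem_range] at hu ⊢
    exact ⟨by omega, hu.2⟩
  · intro u1 hu1 u2 hu2 he
    simp only [Finset.mem_filter, Finset.mem_range] at hu1 hu2
    omega
  · intro r hr
    simp only [Finset.mem_filter, Finset.mem_range] at hr
    refine ⟨h - 1 - r, Finset.mem_filter.mpr ⟨Finset.mem_range.mpr (by omega), ?_⟩, by omega⟩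
    have : h - 1 - (h - 1 - r) = r := by omega
    rw [this]
    exact hr.2

lemma prod_split_one {M : Type*} [CommMonoid M] (n t : ℕ) (F : ℕ → M) :
    ∏ c ∈ Finset.range n, F c =
      (∏ c ∈ Finset.range n, if c = t then 1 else F c) * (if t < n then F t else 1) := by
  have h1 : ∀ c, F c = (if c = t then 1 else F c) * (if c = t then F c else 1) := by
    intro c
    by_cases hc : c = t <;> simp [hc]
  calc ∏ c ∈ Finset.range n, F c
      = ∏ c ∈ Finset.range n, ((if c = t then 1 else F c) * (if c = t then F c else 1)) :=
        Finset.prod_congr rfl (fun c _ => h1 c)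
    _ = (∏ c ∈ Finset.range n, if c = t then 1 else F c) *
          ∏ c ∈ Finset.range n, (if c = t then F c else 1) := Finset.prod_mul_distrib
    _ = _ := by rw [Finset.prod_ite_eq' (Finset.range n) t F]; simp only [Finset.mem_range]

lemma cMix_ne_zero (h : ℕ) (X Y : JPartition) (hXY : X.sub Y)
    (hXv : ∀ r, h ≤ r → X.part r = 0) (hYv : ∀ r, h ≤ r → Y.part r = 0) :
    cMix X Y ≠ 0 := by
  rw [cMix, boxProdM_eq_prod hXv]
  apply Finset.prod_ne_zero_iff.mpr
  intro r hr
  apply Finset.prod_ne_zero_iff.mpr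
  intro c hc
  rw [Finset.mem_range] at hr hc
  have hcY : c < Y.part r := lt_of_lt_of_le hc (hXY r)
  have hleg : r < Y.conjPart c := lt_conjPart hYv hr hcY
  have key : ((X.arm (r, c) : K) * alpha + (Y.leg (r, c) : K) + 1) =
      ((X.arm (r, c) : K) * alpha + ((Y.leg (r, c) + 1 : ℤ) : K)) := by
    push_cast; ring
  rw [key]
  apply nz
  simp only [JPartition.leg]
  omega

end Stmt6Aux

open Stmt6Aux in
/-- Adding a box of `λ\μ` to `μ` (in row `i`, giving the partition `μ₊`):
`c_{μ₊,λ}/c_{μ,λ} = (c_{λ̂,μ̂₊}·c_{μ₊,β})/(c_{λ̂,μ̂}·c_{μ,β})`, hats denoting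
rotated complements in `β = (b^h)`. -/
theorem stmt6 (b h : ℕ) (l m mplus : JPartition) (h2 : l.sub (rect b h))
    (h1 : m.sub l) (i : ℕ) (hbox : m.part i < l.part i)
    (hplus : mplus.part = Function.update m.part i (m.part i + 1)) :
    cMix mplus l / cMix m l =
      (cMix (rotC b h l) (rotC b h mplus) * cMix mplus (rect b h)) /
        (cMix (rotC b h l) (rotC b h m) * cMix m (rect b h)) := by
  classical
  -- basic facts
  have hrectv : ∀ r, h ≤ r → (rect b h).part r = 0 := fun r hr => if_neg (by omega)
  have hlv : ∀ r, h ≤ r → l.part r = 0 := by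
    intro r hr
    have := h2 r
    rw [hrectv r hr] at this
    omega
  have hmv : ∀ r, h ≤ r → m.part r = 0 := by
    intro r hr
    have := h1 r
    rw [hlv r hr] at this
    omega
  have hlb : ∀ r, l.part r ≤ b := by
    intro r
    by_cases hr : r < h
    · have := h2 r
      simpa [rect, if_pos hr] using this
    · rw [hlv r (by omega)]
      omega
  have hih : i < h := by
    by_contra hc
    rw [hlv i (by omega)] at hbox
    omega
  have hjb : m.part i < b := lt_of_lt_of_le hbox (hlb i)
  have hmp_i : mplus.part i = m.part i + 1 := by rw [hplus]; simp
  have hmp_ne : ∀ r, r ≠ i → mplus.part r = m.part r := by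
    intro r hr
    rw [hplus]
    exact Function.update_of_ne hr _ _
  have hmpv : ∀ r, h ≤ r → mplus.part r = 0 := by
    intro r hr
    rw [hmp_ne r (by omega), hmv r hr]
  have hmp_sub_l : mplus.sub l := by
    intro r
    by_cases hr : r = i
    · subst hr; rw [hmp_i]; omega
    · rw [hmp_ne r hr]; exact h1 r
  have hm_rect : m.sub (rect b h) := fun r => le_trans (h1 r) (h2 r)
  have hmp_rect : mplus.sub (rect b h) := fun r => le_trans (hmp_sub_l r) (h2 r)
  have hmpb : ∀ r, mplus.part r ≤ b := fun r => le_trans (hmp_sub_l r) (hlb r)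
  have hmb : ∀ r, m.part r ≤ b := fun r => le_trans (h1 r) (hlb r)
  have hmlt : ∀ r, r < i → m.part i < m.part r := by
    intro r hr
    have := mplus.antitone' (le_of_lt hr)
    rw [hmp_i, hmp_ne r (by omega)] at this
    omega
  have hmle : ∀ r, i ≤ r → m.part r ≤ m.part i := fun r hr => m.antitone' hr
  -- conjugate computations
  have hcm : m.conjPart (m.part i) = i := by
    rw [conjPart_eq_card hmv]
    have he : (Finset.range h).filter (fun r => m.part i < m.part r) = Finset.range i := by
      ext r
      simp only [Finset.mem_filter, Finset.mem_range]
      constructor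
      · rintro ⟨hr, hc⟩
        by_contra hri
        have := hmle r (by omega)
        omega
      · intro hr
        exact ⟨by omega, hmlt r hr⟩
    rw [he, Finset.card_range]
  have hcmp : mplus.conjPart (m.part i) = i + 1 := by
    rw [conjPart_eq_card hmpv]
    have he : (Finset.range h).filter (fun r => m.part i < mplus.part r) =
        Finset.range (i + 1) := by
      ext r
      simp only [Finset.mem_filter, Finset.mem_range]
      constructor
      · rintro ⟨hr, hc⟩
        by_contra hri
        rw [hmp_ne r (by omega)] at hc
        have := hmle r (by omega)
        omega
      · intro hr
        by_cases hri : r = i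
        · subst hri
          rw [hmp_i]
          exact ⟨by omega, by omega⟩
        · rw [hmp_ne r hri]
          exact ⟨by omega, hmlt r (by omega)⟩
    rw [he, Finset.card_range]
  have hcms : ∀ c, c ≠ m.part i → mplus.conjPart c = m.conjPart c := by
    intro c hc
    rw [conjPart_eq_card hmpv, conjPart_eq_card hmv]
    congr 1
    ext r
    simp only [Finset.mem_filter, Finset.mem_range]
    by_cases hri : r = i
    · subst hri
      rw [hmp_i]
      constructor
      · rintro ⟨hr, hcc⟩; exact ⟨hr, by omega⟩
      · rintro ⟨hr, hcc⟩; exact ⟨hr, by omega⟩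
    · rw [hmp_ne r hri]
  -- rotated complement conjugates at the special column
  have hhatm : (rotC b h m).conjPart (b - 1 - m.part i) = h - i := by
    rw [rotC_conjPart m (by omega) hmb hmv]
    have he : b - 1 - (b - 1 - m.part i) = m.part i := by omega
    rw [he, hcm]
  have hhatmp : (rotC b h mplus).conjPart (b - 1 - m.part i) = h - (i + 1) := by
    rw [rotC_conjPart mplus (by omega) hmpb hmpv]
    have he : b - 1 - (b - 1 - m.part i) = m.part i := by omega
    rw [he, hcmp]
  have hhat_ne : ∀ c, c < b → c ≠ b - 1 - m.part i →
      (rotC b h mplus).conjPart c = (rotC b h m).conjPart c := by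
    intro c hcb hcj
    rw [rotC_conjPart mplus hcb hmpb hmpv, rotC_conjPart m hcb hmb hmv, hcms (b - 1 - c) (by omega)]
  -- decompositions
  have d1 : cMix m l =
      (∏ c ∈ Finset.range (m.part i),
        (((m.part i : K) - 1 - (c : K)) * alpha +
          ((((Finset.range h).filter (fun r => c < l.part r)).card : K) + -(i : K)))) *
      ∏ r ∈ (Finset.range h).erase i, ∏ c ∈ Finset.range (m.part r),
        ((m.arm (r, c) : K) * alpha + (l.leg (r, c) : K) + 1) := by
    rw [cMix, boxProdM_eq_prod hmv,
      ← Finset.mul_prod_erase (Finset.range h) _ (Finset.mem_range.mpr hih)]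
    congr 1
    apply Finset.prod_congr rfl
    intro c hc
    rw [Finset.mem_range] at hc
    simp only [JPartition.arm, JPartition.leg]
    rw [conjPart_eq_card hlv]
    push_cast
    ring
  have d2 : cMix mplus l =
      (∏ c ∈ Finset.range (m.part i + 1),
        (((m.part i : K) - (c : K)) * alpha +
          ((((Finset.range h).filter (fun r => c < l.part r)).card : K) + -(i : K)))) *
      ∏ r ∈ (Finset.range h).erase i, ∏ c ∈ Finset.range (m.part r),
        ((m.arm (r, c) : K) * alpha + (l.leg (r, c) : K) + 1) := by
    rw [cMix, boxProdM_eq_prod hmpv,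
      ← Finset.mul_prod_erase (Finset.range h) _ (Finset.mem_range.mpr hih)]
    congr 1
    · rw [hmp_i]
      apply Finset.prod_congr rfl
      intro c hc
      rw [Finset.mem_range] at hc
      simp only [JPartition.arm, JPartition.leg, hmp_i]
      rw [conjPart_eq_card hlv]
      push_cast
      ring
    · apply Finset.prod_congr rfl
      intro r hr
      have hri : r ≠ i := (Finset.mem_erase.mp hr).1
      simp only [JPartition.arm, hmp_ne r hri]
  have d3 : cMix m (rect b h) =
      (∏ c ∈ Finset.range (m.part i),
        (((m.part i : K) - 1 - (c : K)) * alpha + ((h : K) + -(i : K)))) *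
      ∏ r ∈ (Finset.range h).erase i, ∏ c ∈ Finset.range (m.part r),
        ((m.arm (r, c) : K) * alpha + ((rect b h).leg (r, c) : K) + 1) := by
    rw [cMix, boxProdM_eq_prod hmv,
      ← Finset.mul_prod_erase (Finset.range h) _ (Finset.mem_range.mpr hih)]
    congr 1
    apply Finset.prod_congr rfl
    intro c hc
    rw [Finset.mem_range] at hc
    simp only [JPartition.arm, JPartition.leg]
    rw [rect_conjPart (show c < b by omega)]
    push_cast
    ring
  have d4 : cMix mplus (rect b h) =
      (∏ c ∈ Finset.range (m.part i + 1),
        (((m.part i : K) - (c : K)) * alpha + ((h : K) + -(i : K)))) *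
      ∏ r ∈ (Finset.range h).erase i, ∏ c ∈ Finset.range (m.part r),
        ((m.arm (r, c) : K) * alpha + ((rect b h).leg (r, c) : K) + 1) := by
    rw [cMix, boxProdM_eq_prod hmpv,
      ← Finset.mul_prod_erase (Finset.range h) _ (Finset.mem_range.mpr hih)]
    congr 1
    · rw [hmp_i]
      apply Finset.prod_congr rfl
      intro c hc
      rw [Finset.mem_range] at hc
      simp only [JPartition.arm, JPartition.leg, hmp_i]
      rw [rect_conjPart (show c < b by omega)]
      push_cast
      ring
    · apply Finset.prod_congr rfl
      intro r hr
      have hri : r ≠ i := (Finset.mem_erase.mp hr).1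
      simp only [JPartition.arm, hmp_ne r hri]
  -- the rotated-complement pair: split off column b-1-m.part i
  have hlhatb : ∀ u, (rotC b h l).part u ≤ b := by
    intro u
    by_cases hu : u < h
    · rw [rotC_part l hu]; omega
    · rw [rotC_vanish b h l u (by omega)]; omega
  have dsplit : ∀ Y : JPartition,
      (∏ u ∈ Finset.range h, ∏ c ∈ Finset.range ((rotC b h l).part u),
        (((rotC b h l).arm (u, c) : K) * alpha + (Y.leg (u, c) : K) + 1)) =
      (∏ u ∈ Finset.range h, ∏ c ∈ Finset.range ((rotC b h l).part u),
        (if c = b - 1 - m.part i then 1 else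
          (((rotC b h l).arm (u, c) : K) * alpha + (Y.leg (u, c) : K) + 1))) *
      ∏ u ∈ (Finset.range h).filter (fun u => b - 1 - m.part i < (rotC b h l).part u),
        (((rotC b h l).arm (u, b - 1 - m.part i) : K) * alpha +
          (Y.leg (u, b - 1 - m.part i) : K) + 1) := by
    intro Y
    rw [Finset.prod_filter]
    rw [← Finset.prod_mul_distrib]
    apply Finset.prod_congr rfl
    intro u _
    exact prod_split_one _ _ _
  have d5 : cMix (rotC b h l) (rotC b h m) =
      (∏ u ∈ Finset.range h, ∏ c ∈ Finset.range ((rotC b h l).part u),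
        (if c = b - 1 - m.part i then 1 else
          (((rotC b h l).arm (u, c) : K) * alpha + ((rotC b h m).leg (u, c) : K) + 1))) *
      ∏ u ∈ (Finset.range h).filter (fun u => b - 1 - m.part i < (rotC b h l).part u),
        (((rotC b h l).arm (u, b - 1 - m.part i) : K) * alpha +
          ((rotC b h m).leg (u, b - 1 - m.part i) : K) + 1) := by
    rw [cMix, boxProdM_eq_prod (rotC_vanish b h l)]
    exact dsplit (rotC b h m)
  have d6 : cMix (rotC b h l) (rotC b h mplus) =
      (∏ u ∈ Finset.range h, ∏ c ∈ Finset.range ((rotC b h l).part u),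
        (if c = b - 1 - m.part i then 1 else
          (((rotC b h l).arm (u, c) : K) * alpha + ((rotC b h m).leg (u, c) : K) + 1))) *
      ∏ u ∈ (Finset.range h).filter (fun u => b - 1 - m.part i < (rotC b h l).part u),
        (((rotC b h l).arm (u, b - 1 - m.part i) : K) * alpha +
          ((rotC b h mplus).leg (u, b - 1 - m.part i) : K) + 1) := by
    rw [cMix, boxProdM_eq_prod (rotC_vanish b h l)]
    rw [dsplit (rotC b h mplus)]
    congr 1
    apply Finset.prod_congr rfl
    intro u _
    apply Finset.prod_congr rfl
    intro c hc
    rw [Finset.mem_range] at hc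
    by_cases hcj : c = b - 1 - m.part i
    · rw [if_pos hcj, if_pos hcj]
    · rw [if_neg hcj, if_neg hcj]
      have hcb : c < b := lt_of_lt_of_le hc (hlhatb u)
      simp only [JPartition.leg]
      rw [hhat_ne c hcb hcj]
  -- reindex the column products to rows of l
  have hcolmem : ∀ u, u ∈ (Finset.range h).filter
      (fun u => b - 1 - m.part i < (rotC b h l).part u) ↔
      (u < h ∧ l.part (h - 1 - u) ≤ m.part i) := by
    intro u
    simp only [Finset.mem_filter, Finset.mem_range]
    constructor
    · rintro ⟨hu, hcu⟩
      rw [rotC_part l hu] at hcu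
      have := hlb (h - 1 - u)
      exact ⟨hu, by omega⟩
    · rintro ⟨hu, hcu⟩
      refine ⟨hu, ?_⟩
      rw [rotC_part l hu]
      have := hlb (h - 1 - u)
      omega
  have harm : ∀ u, u < h → l.part (h - 1 - u) ≤ m.part i →
      (rotC b h l).arm (u, b - 1 - m.part i) = (m.part i : ℤ) - (l.part (h - 1 - u) : ℤ) := by
    intro u hu1 hu2
    simp only [JPartition.arm]
    rw [rotC_part l hu1]
    have := hlb (h - 1 - u)
    omega
  have hE1 : (∏ u ∈ (Finset.range h).filter
        (fun u => b - 1 - m.part i < (rotC b h l).part u),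
        (((rotC b h l).arm (u, b - 1 - m.part i) : K) * alpha +
          ((rotC b h m).leg (u, b - 1 - m.part i) : K) + 1)) =
      ∏ r ∈ (Finset.range h).filter (fun r => l.part r ≤ m.part i),
        (((m.part i : K) - (l.part r : K)) * alpha + (((r : K) + 1) + -(i : K))) := by
    apply Finset.prod_nbij' (fun u => h - 1 - u) (fun r => h - 1 - r)
    · intro u hu
      rw [hcolmem] at hu
      simp only [Finset.mem_filter, Finset.mem_range]
      exact ⟨by omega, hu.2⟩
    · intro r hr
      simp only [Finset.mem_filter, Finset.mem_range] at hr
      rw [hcolmem]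
      have he : h - 1 - (h - 1 - r) = r := by omega
      rw [he]
      exact ⟨by omega, hr.2⟩
    · intro u hu
      rw [hcolmem] at hu
      omega
    · intro r hr
      simp only [Finset.mem_filter, Finset.mem_range] at hr
      omega
    · intro u hu
      rw [hcolmem] at hu
      obtain ⟨hu1, hu2⟩ := hu
      have e2 : (rotC b h m).leg (u, b - 1 - m.part i) = ((h - 1 - u : ℕ) : ℤ) - (i : ℤ) := by
        simp only [JPartition.leg]
        rw [hhatm]
        omega
      rw [harm u hu1 hu2, e2]
      push_cast
      ring
  have hE0 : (∏ u ∈ (Finset.range h).filter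
        (fun u => b - 1 - m.part i < (rotC b h l).part u),
        (((rotC b h l).arm (u, b - 1 - m.part i) : K) * alpha +
          ((rotC b h mplus).leg (u, b - 1 - m.part i) : K) + 1)) =
      ∏ r ∈ (Finset.range h).filter (fun r => l.part r ≤ m.part i),
        (((m.part i : K) - (l.part r : K)) * alpha + ((r : K) + -(i : K))) := by
    apply Finset.prod_nbij' (fun u => h - 1 - u) (fun r => h - 1 - r)
    · intro u hu
      rw [hcolmem] at hu
      simp only [Finset.mem_filter, Finset.mem_range]
      exact ⟨by omega, hu.2⟩
    · intro r hr
      simp only [Finset.mem_filter, Finset.mem_range] at hr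
      rw [hcolmem]
      have he : h - 1 - (h - 1 - r) = r := by omega
      rw [he]
      exact ⟨by omega, hr.2⟩
    · intro u hu
      rw [hcolmem] at hu
      omega
    · intro r hr
      simp only [Finset.mem_filter, Finset.mem_range] at hr
      omega
    · intro u hu
      rw [hcolmem] at hu
      obtain ⟨hu1, hu2⟩ := hu
      have e2 : (rotC b h mplus).leg (u, b - 1 - m.part i) = ((h - 1 - u : ℕ) : ℤ) - (i : ℤ) - 1 := by
        simp only [JPartition.leg]
        rw [hhatmp]
        omega
      rw [harm u hu1 hu2, e2]
      push_cast
      ring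
  -- peeling the rectangle row product
  have hBp : (∏ c ∈ Finset.range (m.part i + 1),
        (((m.part i : K) - (c : K)) * alpha + ((h : K) + -(i : K)))) =
      (∏ c ∈ Finset.range (m.part i),
        (((m.part i : K) - 1 - (c : K)) * alpha + ((h : K) + -(i : K)))) *
      ((m.part i : K) * alpha + ((h : K) + -(i : K))) := by
    rw [Finset.prod_range_succ']
    congr 1
    · apply Finset.prod_congr rfl
      intro c _
      push_cast
      ring
    · push_cast
      ring
  -- the master identity
  have hmaster := master (-(i : K)) h (m.part i) l.part l.antitone'
  -- nonvanishing
  have hne1 : cMix m l ≠ 0 := cMix_ne_zero h m l h1 hmv hlv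
  have hhatsub : (rotC b h l).sub (rotC b h m) := by
    intro u
    by_cases hu : u < h
    · rw [rotC_part l hu, rotC_part m hu]
      exact Nat.sub_le_sub_left (h1 _) b
    · rw [rotC_vanish b h l u (by omega)]
      omega
  have hne2 : cMix (rotC b h l) (rotC b h m) ≠ 0 :=
    cMix_ne_zero h _ _ hhatsub (rotC_vanish b h l) (rotC_vanish b h m)
  have hne3 : cMix m (rect b h) ≠ 0 := cMix_ne_zero h m _ hm_rect hmv hrectv
  rw [div_eq_div_iff hne1 (mul_ne_zero hne2 hne3)]
  rw [d1, d2, d3, d4, d5, d6, hE1, hE0, hBp]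
  linear_combination
    ((∏ r ∈ (Finset.range h).erase i, ∏ c ∈ Finset.range (m.part r),
        ((m.arm (r, c) : K) * alpha + (l.leg (r, c) : K) + 1)) *
     (∏ r ∈ (Finset.range h).erase i, ∏ c ∈ Finset.range (m.part r),
        ((m.arm (r, c) : K) * alpha + ((rect b h).leg (r, c) : K) + 1)) *
     (∏ u ∈ Finset.range h, ∏ c ∈ Finset.range ((rotC b h l).part u),
        (if c = b - 1 - m.part i then 1 else
          (((rotC b h l).arm (u, c) : K) * alpha + ((rotC b h m).leg (u, c) : K) + 1))) *
     (∏ c ∈ Finset.range (m.part i),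
        (((m.part i : K) - 1 - (c : K)) * alpha + ((h : K) + -(i : K))))) * hmaster

end
end
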